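/- Suppose κ ∈ End(ℂ^d) is invertible and satisfies C^{(11)}·(κ⊗κ) = (κ⊗κ)·C^{(22)} and (κ⊗1)·C^{(21)}·(1⊗κ) = (1⊗κ)·C^{(12)}·(κ⊗1). Then there exists a Lie algebra involution α : 𝔤 → 𝔤 (a Lie algebra automorphism with α ∘ α = id_𝔤) such that κ·ρ⁽²⁾(X)·κ⁻¹ = ρ⁽¹⁾(α(X)) for all X ∈ 𝔤. -/

import Mathlib

open Kronecker

attribute [local instance 100] LieRing.ofAssociativeRing

section Stmt5Aux

variable {d : ℕ}

/-- Partial trace over the second tensor factor. -/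
noncomputable def ptr2 (M : Matrix (Fin d × Fin d) (Fin d × Fin d) ℂ) :
    Matrix (Fin d) (Fin d) ℂ :=
  Matrix.of fun i j => ∑ k, M (i, k) (j, k)

lemma ptr2_kron (A B : Matrix (Fin d) (Fin d) ℂ) :
    ptr2 (A ⊗ₖ B) = B.trace • A := by
  ext i j
  simp only [ptr2, Matrix.of_apply, Matrix.kroneckerMap_apply, Matrix.smul_apply,
    Matrix.trace, Matrix.diag, smul_eq_mul]
  rw [Finset.sum_mul]
  exact Finset.sum_congr rfl fun k _ => mul_comm _ _

lemma ptr2_sum {ι : Type*} (s : Finset ι)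
    (f : ι → Matrix (Fin d × Fin d) (Fin d × Fin d) ℂ) :
    ptr2 (∑ A ∈ s, f A) = ∑ A ∈ s, ptr2 (f A) := by
  ext i j
  simp only [ptr2, Matrix.of_apply, Matrix.sum_apply]
  rw [Finset.sum_comm]

lemma ptr2_sum_kron {ι : Type*} [Fintype ι] (f g : ι → Matrix (Fin d) (Fin d) ℂ) :
    ptr2 (∑ A : ι, f A ⊗ₖ g A) = ∑ A : ι, (g A).trace • f A := by
  rw [ptr2_sum]
  exact Finset.sum_congr rfl fun A _ => ptr2_kron _ _

lemma kron_sum_mul_right {ι : Type*} [Fintype ι]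
    (f g : ι → Matrix (Fin d) (Fin d) ℂ) (R S : Matrix (Fin d) (Fin d) ℂ) :
    (∑ A : ι, f A ⊗ₖ g A) * (R ⊗ₖ S) = ∑ A : ι, (f A * R) ⊗ₖ (g A * S) := by
  rw [Finset.sum_mul]
  exact Finset.sum_congr rfl fun A _ => (Matrix.mul_kronecker_mul _ _ _ _).symm

lemma kron_sum_mul_left {ι : Type*} [Fintype ι]
    (f g : ι → Matrix (Fin d) (Fin d) ℂ) (P Q : Matrix (Fin d) (Fin d) ℂ) :
    (P ⊗ₖ Q) * (∑ A : ι, f A ⊗ₖ g A) = ∑ A : ι, (P * f A) ⊗ₖ (Q * g A) := by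
  rw [Finset.mul_sum]
  exact Finset.sum_congr rfl fun A _ => (Matrix.mul_kronecker_mul _ _ _ _).symm

end Stmt5Aux

/-- if `κ` is invertible and satisfies both classical bYBE constraints, then
there is a Lie algebra involution `α` of `𝔤` with `κρ⁽²⁾(X)κ⁻¹ = ρ⁽¹⁾(α(X))` for all `X`. -/
theorem stmt_5 {L : Type*} [LieRing L] [LieAlgebra ℂ L] [FiniteDimensional ℂ L]
    [LieAlgebra.IsSimple ℂ L]
    (hB : LinearMap.BilinForm.Nondegenerate (killingForm ℂ L))
    {d : ℕ} (ρ₁ ρ₂ : L →ₗ⁅ℂ⁆ Matrix (Fin d) (Fin d) ℂ)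
    (hρ₁ : Function.Injective ρ₁) (hρ₂ : Function.Injective ρ₂)
    (c₁ c₂ : ℂ) (hc₁ : c₁ ≠ 0) (hc₂ : c₂ ≠ 0)
    (htr₁ : ∀ X Y : L, Matrix.trace (ρ₁ X * ρ₁ Y) = c₁ * killingForm ℂ L X Y)
    (htr₂ : ∀ X Y : L, Matrix.trace (ρ₂ X * ρ₂ Y) = c₂ * killingForm ℂ L X Y)
    {ι : Type*} [Fintype ι] [DecidableEq ι] (Xb : Module.Basis ι ℂ L) (Xd : ι → L)
    (hdual : ∀ A B : ι, killingForm ℂ L (Xb A) (Xd B) = if A = B then 1 else 0)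
    (κ : Matrix (Fin d) (Fin d) ℂ) (hκ : IsUnit κ)
    (hcbYBE₁ : (∑ A : ι, ρ₁ (Xb A) ⊗ₖ ρ₁ (Xd A)) * (κ ⊗ₖ κ) =
        (κ ⊗ₖ κ) * (∑ A : ι, ρ₂ (Xb A) ⊗ₖ ρ₂ (Xd A)))
    (hcbYBE₂ : (κ ⊗ₖ (1 : Matrix (Fin d) (Fin d) ℂ)) *
          (∑ A : ι, ρ₂ (Xb A) ⊗ₖ ρ₁ (Xd A)) * ((1 : Matrix (Fin d) (Fin d) ℂ) ⊗ₖ κ) =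
        ((1 : Matrix (Fin d) (Fin d) ℂ) ⊗ₖ κ) *
          (∑ A : ι, ρ₁ (Xb A) ⊗ₖ ρ₂ (Xd A)) * (κ ⊗ₖ (1 : Matrix (Fin d) (Fin d) ℂ))) :
    ∃ α : L →ₗ⁅ℂ⁆ L, (∀ X : L, α (α X) = X) ∧
      (∀ X : L, κ * ρ₂ X * κ⁻¹ = ρ₁ (α X)) := by
  have hκd : IsUnit κ.det := (Matrix.isUnit_iff_isUnit_det κ).mp hκ
  have hκ1 : κ * κ⁻¹ = 1 := Matrix.mul_nonsing_inv κ hκd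
  have hκ2 : κ⁻¹ * κ = 1 := Matrix.nonsing_inv_mul κ hκd
  have hcan : ∀ M : Matrix (Fin d) (Fin d) ℂ, κ⁻¹ * (κ * M) = M := by
    intro M; rw [← Matrix.mul_assoc, hκ2, Matrix.one_mul]
  have hcan' : ∀ M : Matrix (Fin d) (Fin d) ℂ, κ * (κ⁻¹ * M) = M := by
    intro M; rw [← Matrix.mul_assoc, hκ1, Matrix.one_mul]
  have hsym : ∀ X Y : L, killingForm ℂ L X Y = killingForm ℂ L Y X := fun X Y =>
    LieModule.traceForm_comm ℂ L L X Y
  have hρ₁sum : ∀ f : ι → L, ρ₁ (∑ A : ι, f A) = ∑ A : ι, ρ₁ (f A) := by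
    intro f
    have h := map_sum (ρ₁ : L →ₗ[ℂ] Matrix (Fin d) (Fin d) ℂ) f Finset.univ
    simp only [LieHom.coe_toLinearMap] at h
    exact h
  have hρ₂sum : ∀ f : ι → L, ρ₂ (∑ A : ι, f A) = ∑ A : ι, ρ₂ (f A) := by
    intro f
    have h := map_sum (ρ₂ : L →ₗ[ℂ] Matrix (Fin d) (Fin d) ℂ) f Finset.univ
    simp only [LieHom.coe_toLinearMap] at h
    exact h
  -- expansion with respect to the basis
  have hexp : ∀ Y : L, ∑ A : ι, (killingForm ℂ L (Xd A) Y) • Xb A = Y := by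
    have hT : (∑ A : ι, LinearMap.smulRight (killingForm ℂ L (Xd A)) (Xb A)) =
        (LinearMap.id : L →ₗ[ℂ] L) := by
      apply Xb.ext
      intro B
      simp only [LinearMap.sum_apply, LinearMap.smulRight_apply, LinearMap.id_apply]
      have h : ∀ A : ι, killingForm ℂ L (Xd A) (Xb B) = if B = A then 1 else 0 := by
        intro A; rw [hsym, hdual]
      simp [h]
    intro Y
    simpa using LinearMap.congr_fun hT Y
  -- conjugation map
  set N : L → Matrix (Fin d) (Fin d) ℂ := fun Y => κ * ρ₂ Y * κ⁻¹ with hN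
  -- key identity from the first bYBE constraint
  have hstar : ∀ Y : L,
      ∑ A : ι, (Matrix.trace (ρ₁ (Xd A) * N Y)) • ρ₁ (Xb A) = c₂ • N Y := by
    intro Y
    have h1 : (∑ A : ι, (ρ₁ (Xb A) * κ) ⊗ₖ (ρ₁ (Xd A) * κ)) =
        ∑ A : ι, (κ * ρ₂ (Xb A)) ⊗ₖ (κ * ρ₂ (Xd A)) := by
      rw [← kron_sum_mul_right, ← kron_sum_mul_left]
      exact hcbYBE₁
    have h2 := congrArg (fun M => M * (κ⁻¹ ⊗ₖ (ρ₂ Y * κ⁻¹))) h1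
    simp only [kron_sum_mul_right] at h2
    have h3 := congrArg ptr2 h2
    simp only [ptr2_sum_kron] at h3
    have hL : ∀ A : ι, ρ₁ (Xb A) * κ * κ⁻¹ = ρ₁ (Xb A) := by
      intro A; rw [Matrix.mul_assoc, hκ1, Matrix.mul_one]
    have htrL : ∀ A : ι, (ρ₁ (Xd A) * κ * (ρ₂ Y * κ⁻¹)).trace = (ρ₁ (Xd A) * N Y).trace := by
      intro A; congr 1
      simp only [hN, Matrix.mul_assoc]
    have htrR : ∀ A : ι, (κ * ρ₂ (Xd A) * (ρ₂ Y * κ⁻¹)).trace =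
        c₂ * killingForm ℂ L (Xd A) Y := by
      intro A
      rw [Matrix.trace_mul_comm, Matrix.mul_assoc, ← Matrix.mul_assoc κ⁻¹ κ, hκ2,
        Matrix.one_mul, Matrix.trace_mul_comm, htr₂]
    simp only [hL, htrL, htrR] at h3
    rw [h3]
    have hrw : ∑ A : ι, (c₂ * killingForm ℂ L (Xd A) Y) • (κ * ρ₂ (Xb A) * κ⁻¹) =
        c₂ • (κ * ρ₂ (∑ A : ι, (killingForm ℂ L (Xd A) Y) • Xb A) * κ⁻¹) := by
      rw [hρ₂sum, Finset.mul_sum, Finset.sum_mul, Finset.smul_sum]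
      refine Finset.sum_congr rfl fun A _ => ?_
      rw [map_smul, Matrix.mul_smul, Matrix.smul_mul, smul_smul]
    rw [hrw, hexp]
  -- the candidate linear map
  set α₀ : L →ₗ[ℂ] L :=
    { toFun := fun Y => c₂⁻¹ • ∑ A : ι, (Matrix.trace (ρ₁ (Xd A) * N Y)) • Xb A
      map_add' := by
        intro X Y
        have hadd : N (X + Y) = N X + N Y := by
          simp [hN, map_add, Matrix.add_mul, Matrix.mul_add]
        simp [hadd, Matrix.mul_add, Matrix.trace_add, add_smul, Finset.sum_add_distrib,
          smul_add]
      map_smul' := by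
        intro c Y
        have hsmul : N (c • Y) = c • N Y := by
          simp [hN, map_smul, Matrix.smul_mul, Matrix.mul_smul]
        simp only [hsmul, Matrix.mul_smul, Matrix.trace_smul, smul_eq_mul,
          RingHom.id_apply, mul_smul]
        rw [← Finset.smul_sum, smul_comm] } with hα₀
  have hα₀sum : ∀ f : ι → L, α₀ (∑ A : ι, f A) = ∑ A : ι, α₀ (f A) := fun f =>
    map_sum α₀ f Finset.univ
  have hkey : ∀ Y : L, ρ₁ (α₀ Y) = N Y := by
    intro Y
    have h0 : α₀ Y = c₂⁻¹ • ∑ A : ι, (Matrix.trace (ρ₁ (Xd A) * N Y)) • Xb A := rfl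
    rw [h0, map_smul, hρ₁sum]
    simp only [map_smul]
    rw [hstar, smul_smul, inv_mul_cancel₀ hc₂, one_smul]
  -- α₀ is a morphism of Lie algebras
  have hα₀lie : ∀ X Y : L, α₀ ⁅X, Y⁆ = ⁅α₀ X, α₀ Y⁆ := by
    intro X Y
    apply hρ₁
    rw [LieHom.map_lie, hkey, hkey, hkey]
    simp only [hN, LieHom.map_lie, Ring.lie_def]
    simp only [Matrix.mul_sub, Matrix.sub_mul, Matrix.mul_assoc]
    simp only [hcan]
  -- second constraint
  have hconj : ∀ Z : L, κ * ρ₂ Z = ρ₁ (α₀ Z) * κ := by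
    intro Z
    rw [hkey]
    simp only [hN, Matrix.mul_assoc]
    rw [hκ2, Matrix.mul_one]
  have hII : (∑ A : ι, ρ₁ (α₀ (Xb A)) ⊗ₖ ρ₁ (Xd A)) =
      ∑ A : ι, ρ₁ (Xb A) ⊗ₖ ρ₁ (α₀ (Xd A)) := by
    have e1 := hcbYBE₂
    simp only [kron_sum_mul_left, kron_sum_mul_right] at e1
    have h1 : (∑ A : ι, (κ * ρ₂ (Xb A)) ⊗ₖ (ρ₁ (Xd A) * κ)) =
        ∑ A : ι, (ρ₁ (Xb A) * κ) ⊗ₖ (κ * ρ₂ (Xd A)) := by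
      simpa only [Matrix.mul_one, Matrix.one_mul] using e1
    have h2 : (∑ A : ι, (ρ₁ (α₀ (Xb A)) ⊗ₖ ρ₁ (Xd A))) * (κ ⊗ₖ κ) =
        (∑ A : ι, (ρ₁ (Xb A) ⊗ₖ ρ₁ (α₀ (Xd A)))) * (κ ⊗ₖ κ) := by
      rw [kron_sum_mul_right, kron_sum_mul_right]
      calc ∑ A : ι, (ρ₁ (α₀ (Xb A)) * κ) ⊗ₖ (ρ₁ (Xd A) * κ)
          = ∑ A : ι, (κ * ρ₂ (Xb A)) ⊗ₖ (ρ₁ (Xd A) * κ) := by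
            refine Finset.sum_congr rfl fun A _ => ?_; rw [hconj]
        _ = ∑ A : ι, (ρ₁ (Xb A) * κ) ⊗ₖ (κ * ρ₂ (Xd A)) := h1
        _ = ∑ A : ι, (ρ₁ (Xb A) * κ) ⊗ₖ (ρ₁ (α₀ (Xd A)) * κ) := by
            refine Finset.sum_congr rfl fun A _ => ?_; rw [hconj]
    have h3 := congrArg (fun M => M * (κ⁻¹ ⊗ₖ κ⁻¹)) h2
    simp only [Matrix.mul_assoc, ← Matrix.mul_kronecker_mul, hκ1,
      Matrix.one_kronecker_one, Matrix.mul_one] at h3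
    exact h3
  -- self-adjointness-type identity
  have hIII : ∀ Y : L, α₀ Y = ∑ A : ι, (killingForm ℂ L (α₀ (Xd A)) Y) • Xb A := by
    intro Y
    have h2 := congrArg (fun M => M * ((1 : Matrix (Fin d) (Fin d) ℂ) ⊗ₖ ρ₁ Y)) hII
    simp only [kron_sum_mul_right, Matrix.mul_one] at h2
    have h3 := congrArg ptr2 h2
    simp only [ptr2_sum_kron, htr₁] at h3
    have hL : ∑ A : ι, (c₁ * killingForm ℂ L (Xd A) Y) • ρ₁ (α₀ (Xb A)) =
        c₁ • ρ₁ (α₀ Y) := by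
      conv_rhs => rw [← hexp Y]
      rw [hα₀sum, hρ₁sum, Finset.smul_sum]
      refine Finset.sum_congr rfl fun A _ => ?_
      rw [map_smul, map_smul, smul_smul]
    have hR : ∑ A : ι, (c₁ * killingForm ℂ L (α₀ (Xd A)) Y) • ρ₁ (Xb A) =
        c₁ • ρ₁ (∑ A : ι, (killingForm ℂ L (α₀ (Xd A)) Y) • Xb A) := by
      rw [hρ₁sum, Finset.smul_sum]
      refine Finset.sum_congr rfl fun A _ => ?_
      rw [map_smul, smul_smul]
    rw [hL, hR] at h3
    apply hρ₁
    exact smul_right_injective (Matrix (Fin d) (Fin d) ℂ) hc₁ h3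
  -- α₀ scales the Killing form by c₂ / c₁
  have hIV : ∀ X Y : L, killingForm ℂ L (α₀ X) (α₀ Y) = (c₂ / c₁) * killingForm ℂ L X Y := by
    intro X Y
    have h1 : c₁ * killingForm ℂ L (α₀ X) (α₀ Y) = c₂ * killingForm ℂ L X Y := by
      rw [← htr₁, ← htr₂, hkey, hkey]
      simp only [hN, Matrix.mul_assoc]
      rw [hcan, Matrix.trace_mul_comm]
      simp only [Matrix.mul_assoc]
      rw [hκ2, Matrix.mul_one]
    rw [div_mul_eq_mul_div, eq_div_iff hc₁]
    linear_combination h1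
  -- α₀ squares to (c₂/c₁) • id
  have hV : ∀ Y : L, α₀ (α₀ Y) = (c₂ / c₁) • Y := by
    intro Y
    rw [hIII (α₀ Y)]
    calc ∑ A : ι, (killingForm ℂ L (α₀ (Xd A)) (α₀ Y)) • Xb A
        = (c₂ / c₁) • ∑ A : ι, (killingForm ℂ L (Xd A) Y) • Xb A := by
          rw [Finset.smul_sum]
          refine Finset.sum_congr rfl fun A _ => ?_
          rw [hIV, smul_smul]
      _ = (c₂ / c₁) • Y := by rw [hexp]
  -- simplicity forces the ratio to be 1
  have hlam : (c₂ / c₁) = 1 := by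
    have hne : ∃ X Y : L, ⁅X, Y⁆ ≠ (0 : L) := by
      by_contra h
      push_neg at h
      exact (LieAlgebra.IsSimple.non_abelian (R := ℂ) (L := L)) ⟨fun x y => h x y⟩
    obtain ⟨X₀, Y₀, hXY⟩ := hne
    have h1 : (c₂ / c₁) • ⁅X₀, Y₀⁆ = ((c₂ / c₁) * (c₂ / c₁)) • ⁅X₀, Y₀⁆ := by
      calc (c₂ / c₁) • ⁅X₀, Y₀⁆ = α₀ (α₀ ⁅X₀, Y₀⁆) := (hV _).symm
        _ = ⁅α₀ (α₀ X₀), α₀ (α₀ Y₀)⁆ := by rw [hα₀lie, hα₀lie]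
        _ = ⁅(c₂ / c₁) • X₀, (c₂ / c₁) • Y₀⁆ := by rw [hV, hV]
        _ = ((c₂ / c₁) * (c₂ / c₁)) • ⁅X₀, Y₀⁆ := by
            rw [smul_lie, lie_smul, smul_smul]
    have h2 : ((c₂ / c₁) - (c₂ / c₁) * (c₂ / c₁)) • ⁅X₀, Y₀⁆ = 0 := by
      rw [sub_smul, h1, sub_self]
    have h3 : (c₂ / c₁) - (c₂ / c₁) * (c₂ / c₁) = 0 := by
      rcases smul_eq_zero.mp h2 with h | h
      · exact h
      · exact absurd h hXY
    have hl0 : (c₂ / c₁) ≠ 0 := div_ne_zero hc₂ hc₁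
    have h4 : (c₂ / c₁) * (1 - (c₂ / c₁)) = 0 := by linear_combination h3
    rcases mul_eq_zero.mp h4 with h | h
    · exact absurd h hl0
    · linear_combination -h
  refine ⟨{ α₀ with map_lie' := fun {x y} => hα₀lie x y }, ?_, ?_⟩
  · intro X
    show α₀ (α₀ X) = X
    rw [hV, hlam, one_smul]
  · intro X
    exact (hkey X).symm
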